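/- The cross-entropy loss does not satisfy the Well-Suited Loss Property: there exist vectors y1, y2 ∈ ℝ² such that L_CE(y1, y2) < L_CE(0, y2) yet ⟨y1, y2⟩ ≤ 0. -/

import Mathlib

noncomputable def softmax2 (v : Fin 2 → ℝ) : Fin 2 → ℝ :=
  fun i => Real.exp (v i) / ∑ j, Real.exp (v j)

noncomputable def LCE (y1 y2 : Fin 2 → ℝ) : ℝ :=
  -(∑ i, Real.log (softmax2 y1 i) * softmax2 y2 i)

/-- The cross-entropy loss does not satisfy the Well-Suited Loss Property. -/
theorem crossEntropy_not_WSLP :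
    ∃ y1 y2 : Fin 2 → ℝ, LCE y1 y2 < LCE 0 y2 ∧ (∑ i, y1 i * y2 i) ≤ 0 := by
  refine ⟨![1, 0], ![0, -1], ?_, ?_⟩
  · simp only [LCE, softmax2, Fin.sum_univ_two]
    norm_num
    rw [Real.exp_neg, Real.log_div (Real.exp_ne_zero 1) (by positivity),
      Real.log_exp, show ((1:ℝ)/2) = 2⁻¹ by norm_num, Real.log_inv]
    have ha : (2.7182818283:ℝ) < Real.exp 1 := Real.exp_one_gt_d9
    have ha2 : Real.exp 1 < 2.7182818286 := Real.exp_one_lt_d9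
    have hl2 : Real.log 2 < 0.6931471808 := Real.log_two_lt_d9
    have hl2' : (0.6931471803:ℝ) < Real.log 2 := Real.log_two_gt_d9
    have h4 : Real.log (Real.exp 1 + 1) < 2 * Real.log 2 := by
      rw [show (2:ℝ) * Real.log 2 = Real.log 4 by
        rw [show (4:ℝ) = 2^2 by norm_num, Real.log_pow]; push_cast; ring]
      exact Real.log_lt_log (by positivity) (by nlinarith)
    set a := Real.exp 1 with hadef
    have hapos : (0:ℝ) < a := Real.exp_pos 1
    set L := Real.log (a + 1)
    set M := Real.log 2
    have h1 : (0:ℝ) < 1 + a⁻¹ := by positivity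
    rw [div_eq_mul_inv, inv_eq_one_div a]
    field_simp
    nlinarith [mul_lt_mul_of_pos_right h4 (show (0:ℝ) < a + 1 by linarith),
      mul_lt_mul_of_pos_right hl2 (show (0:ℝ) < a + 1 by linarith), hapos, ha]
  · simp [Fin.sum_univ_two]
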